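/- Suppose λ, μ ∈ P⁺ with ⟨α_i^∨, μ⟩ = 0 whenever ⟨α_i^∨, λ⟩ = 0. If b_λ ⊗ y lies in the connected component F({b_λ ⊗ b_μ}) of B(λ) ⊗ B(μ) generated by b_λ ⊗ b_μ under lowering operators, then y = b_μ. -/

import Mathlib

/-! Common definitions: abstract normal crystals, tensor products, extremal subsets,
hinges, Demazure crystals, and related Coxeter-theoretic notions. -/

/-- Iterate a partially defined map `k` times. -/
def optIter {B : Type*} (g : B → Option B) : ℕ → B → Option B
  | 0, b => some b
  | k + 1, b => (g b).bind (optIter g k)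

/-- The raw data of a crystal: index set `I` (Dynkin nodes), weight lattice `P` with
simple roots `alpha i` and coroot pairings `pair i = ⟨α_i^∨, ·⟩`, and the structure
maps `wt, ε_i, φ_i, e_i, f_i` (with `none` playing the role of `0`). -/
structure CrystalStruct (I : Type*) (P : Type*) [AddCommGroup P] (B : Type*) where
  alpha : I → P
  pair : I → P →+ ℤ
  wt : B → P
  eps : I → B → ℤ
  phi : I → B → ℤ
  e : I → B → Option B
  f : I → B → Option B

namespace CrystalStruct

variable {I P B B₁ B₂ : Type*} [AddCommGroup P]

/-- The crystal axioms (C1)–(C4) of a (finite, normal) crystal. Axiom (C4) is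
expressed by saying `ε_i(b)` (resp. `φ_i(b)`) is the largest `k` with `e_i^k(b)`
(resp. `f_i^k(b)`) defined. -/
structure IsCrystal (C : CrystalStruct I P B) : Prop where
  C1 : ∀ i b, C.phi i b - C.eps i b = C.pair i (C.wt b)
  wt_e : ∀ i b b', C.e i b = some b' → C.wt b' = C.wt b + C.alpha i
  wt_f : ∀ i b b', C.f i b = some b' → C.wt b' = C.wt b - C.alpha i
  C3 : ∀ i b b', C.e i b = some b' ↔ C.f i b' = some b
  eps_nonneg : ∀ i b, 0 ≤ C.eps i b
  phi_nonneg : ∀ i b, 0 ≤ C.phi i b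
  eps_max : ∀ i b, (optIter (C.e i) (C.eps i b).toNat b).isSome ∧
      ∀ k : ℕ, (optIter (C.e i) k b).isSome → (k : ℤ) ≤ C.eps i b
  phi_max : ∀ i b, (optIter (C.f i) (C.phi i b).toNat b).isSome ∧
      ∀ k : ℕ, (optIter (C.f i) k b).isSome → (k : ℤ) ≤ C.phi i b

/-- The tensor product `B₁ ⊗ B₂` of two crystals, with the standard signature rule. -/
def tensor (C₁ : CrystalStruct I P B₁) (C₂ : CrystalStruct I P B₂) :
    CrystalStruct I P (B₁ × B₂) where
  alpha := C₁.alpha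
  pair := C₁.pair
  wt b := C₁.wt b.1 + C₂.wt b.2
  eps i b := max (C₁.eps i b.1) (C₂.eps i b.2 - C₁.pair i (C₁.wt b.1))
  phi i b := max (C₂.phi i b.2) (C₁.phi i b.1 + C₁.pair i (C₂.wt b.2))
  e i b := if C₂.eps i b.2 ≤ C₁.phi i b.1
      then (C₁.e i b.1).map (fun x => (x, b.2))
      else (C₂.e i b.2).map (fun y => (b.1, y))
  f i b := if C₂.eps i b.2 < C₁.phi i b.1
      then (C₁.f i b.1).map (fun x => (x, b.2))
      else (C₂.f i b.2).map (fun y => (b.1, y))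

/-- A subset `X` of a crystal is *extremal* (string property): `X` is nonempty, closed
under all raising operators `e_i`, and whenever `x ∈ X` is not the top of its `i`-string
(i.e. `e_i x` is defined), `X` also contains `f_i x` when defined.  This is the local
reformulation of: every `i`-string meets `X` in `∅`, the whole string, or its top element. -/
def Extremal (C : CrystalStruct I P B) (X : Set B) : Prop :=
  X.Nonempty ∧ ∀ i, ∀ x ∈ X,
    (∀ x', C.e i x = some x' → x' ∈ X) ∧
    ((C.e i x).isSome → ∀ x', C.f i x = some x' → x' ∈ X)

/-- `x ⊗ y` is an *`i`-hinge*: `ε_i(x) > 0`, `φ_i(x) = 0`, `ε_i(y) = 0`, `φ_i(y) > 0`. -/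
def IsHinge (C₁ : CrystalStruct I P B₁) (C₂ : CrystalStruct I P B₂)
    (i : I) (x : B₁) (y : B₂) : Prop :=
  0 < C₁.eps i x ∧ C₁.phi i x = 0 ∧ C₂.eps i y = 0 ∧ 0 < C₂.phi i y

/-- `F_i X = ⋃_{k ≥ 0} f_i^k X` : close a subset under the lowering operator `f_i`. -/
def fClosure (C : CrystalStruct I P B) (i : I) (X : Set B) : Set B :=
  {b | ∃ x ∈ X, ∃ k, optIter (C.f i) k x = some b}

/-- `demWord C [i₁, …, i_k] X = F_{i₁} F_{i₂} ⋯ F_{i_k} X`. -/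
def demWord (C : CrystalStruct I P B) : List I → Set B → Set B
  | [], X => X
  | i :: L, X => C.fClosure i (C.demWord L X)

/-- Apply raising operators along a list of indices. -/
def applyE (C : CrystalStruct I P B) : List I → B → Option B
  | [], b => some b
  | i :: L, b => (C.e i b).bind (C.applyE L)

/-- `applyFPow C [(i₁,m₁),…,(i_k,m_k)] b = f_{i₁}^{m₁} f_{i₂}^{m₂} ⋯ f_{i_k}^{m_k} (b)`. -/
def applyFPow (C : CrystalStruct I P B) : List (I × ℕ) → B → Option B
  | [], b => some b
  | p :: L, b => (C.applyFPow L b).bind (optIter (C.f p.1) p.2)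

/-- A highest weight element: all raising operators vanish. -/
def HighestWeight (C : CrystalStruct I P B) (b : B) : Prop := ∀ i, C.e i b = none

/-- `C` is a highest weight normal crystal with highest weight element `hw`:
it satisfies the crystal axioms, `hw` is highest weight, and `B = F {hw}`. -/
structure IsHWCrystal (C : CrystalStruct I P B) (hw : B) : Prop where
  crystal : C.IsCrystal
  hw_top : C.HighestWeight hw
  connected : ∀ b, ∃ L : List I, b ∈ C.demWord L {hw}

/-- The connected component `F {b}` of `b` (closure under lowering operators). -/
def component (C : CrystalStruct I P B) (b : B) : Set B :=
  {x | ∃ L : List I, x ∈ C.demWord L {b}}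

end CrystalStruct

section Coxeter

open CrystalStruct

variable {I : Type*} {W : Type*} [Group W] {M : CoxeterMatrix I}

/-- Bruhat order via the subword property: `u ⪯ w` iff some reduced word for `w` contains
a reduced word for `u` as a subword. -/
def Bruhat (cs : CoxeterSystem M W) (u w : W) : Prop :=
  ∃ L L' : List I, cs.IsReduced L ∧ cs.wordProd L = w ∧
    L'.Sublist L ∧ cs.IsReduced L' ∧ cs.wordProd L' = u

variable {P B : Type*} [AddCommGroup P]

/-- The Demazure crystal `B_w = F_w {hw}`, as the union over reduced words for `w`
of the corresponding compositions of string closures. -/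
def DemCrystal (cs : CoxeterSystem M W) (C : CrystalStruct I P B) (hw : B) (w : W) :
    Set B :=
  {b | ∃ L : List I, cs.IsReduced L ∧ cs.wordProd L = w ∧ b ∈ C.demWord L {hw}}

/-- Kashiwara's theorem: `F_w {hw}` is independent of the reduced word for `w`. -/
def DemIndep (cs : CoxeterSystem M W) (C : CrystalStruct I P B) (hw : B) : Prop :=
  ∀ L L' : List I, cs.IsReduced L → cs.IsReduced L' → cs.wordProd L = cs.wordProd L' →
    C.demWord L {hw} = C.demWord L' {hw}

/-- A subset is a *direct sum of Demazure crystals* if it is the union, over a set of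
highest weight elements, of Demazure crystals of the corresponding components. -/
def IsDemazureSum (cs : CoxeterSystem M W) (C : CrystalStruct I P B) (Z : Set B) : Prop :=
  ∃ (S : Set B) (wf : B → W), (∀ b ∈ S, C.HighestWeight b) ∧
    Z = ⋃ b ∈ S, DemCrystal cs C b (wf b)

/-- `v` is the minimal-length representative of the coset `w H`. -/
def IsMinCosetRep (cs : CoxeterSystem M W) (H : Subgroup W) (w v : W) : Prop :=
  w⁻¹ * v ∈ H ∧ ∀ x : W, w⁻¹ * x ∈ H → cs.length v ≤ cs.length x

/-- `v` is the maximal-length representative of the coset `w H`. -/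
def IsMaxCosetRep (cs : CoxeterSystem M W) (H : Subgroup W) (w v : W) : Prop :=
  w⁻¹ * v ∈ H ∧ ∀ x : W, w⁻¹ * x ∈ H → cs.length x ≤ cs.length v

/-- The parabolic subgroup `W_σ = ⟨ s_i : s_i σ ≺ σ ⟩` generated by the left descents of `σ`. -/
def descentSubgroup (cs : CoxeterSystem M W) (σ : W) : Subgroup W :=
  Subgroup.closure {g | ∃ i, g = cs.simple i ∧ cs.length (cs.simple i * σ) < cs.length σ}

/-- The Weyl group acts on the weight lattice by simple reflections:
`s_i • p = p − ⟨α_i^∨, p⟩ α_i`. -/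
def ReflectionAction (cs : CoxeterSystem M W) (C : CrystalStruct I P B)
    [MulAction W P] : Prop :=
  ∀ (i : I) (p : P), cs.simple i • p = p - C.pair i p • C.alpha i

end Coxeter

namespace CrystalStruct

variable {I P B : Type*} [AddCommGroup P]

/-- Weight of a pure tensor `b₁ ⊗ ⋯ ⊗ b_m`, encoded as a list. -/
def listWt (C : CrystalStruct I P B) : List B → P
  | [] => 0
  | b :: l => C.wt b + C.listWt l

/-- `ε_i` on iterated tensors. -/
def listEps (C : CrystalStruct I P B) (i : I) : List B → ℤ
  | [] => 0
  | b :: l => max (C.eps i b) (C.listEps i l - C.pair i (C.wt b))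

/-- `φ_i` on iterated tensors. -/
def listPhi (C : CrystalStruct I P B) (i : I) : List B → ℤ
  | [] => 0
  | b :: l => max (C.listPhi i l) (C.phi i b + C.pair i (C.listWt l))

/-- `e_i` on iterated tensors (standard signature rule, iterated associatively). -/
def listE (C : CrystalStruct I P B) (i : I) : List B → Option (List B)
  | [] => none
  | b :: l => if C.listEps i l ≤ C.phi i b then (C.e i b).map (· :: l)
      else (C.listE i l).map (b :: ·)

/-- `f_i` on iterated tensors. -/
def listF (C : CrystalStruct I P B) (i : I) : List B → Option (List B)
  | [] => none
  | b :: l => if C.listEps i l < C.phi i b then (C.f i b).map (· :: l)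
      else (C.listF i l).map (b :: ·)

/-- The iterated tensor power crystal: pure tensors of all finite lengths, the
length-`m` ones forming `B^{⊗ m}`. -/
def tensorPow (C : CrystalStruct I P B) : CrystalStruct I P (List B) where
  alpha := C.alpha
  pair := C.pair
  wt := C.listWt
  eps := C.listEps
  phi := C.listPhi
  e := C.listE
  f := C.listF

end CrystalStruct

section Aux

open CrystalStruct

variable {I P B : Type*} [AddCommGroup P] {C : CrystalStruct I P B}

private lemma aux_eps_eq_zero (hC : C.IsCrystal) {i : I} {b : B}
    (h : C.e i b = none) : C.eps i b = 0 := by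
  have h1 := (hC.eps_max i b).1
  have h0 := hC.eps_nonneg i b
  have hz : (C.eps i b).toNat = 0 := by
    by_contra hne
    obtain ⟨n, hn⟩ := Nat.exists_eq_succ_of_ne_zero hne
    rw [hn] at h1; simp [optIter, h] at h1
  omega

private lemma aux_one_le_phi (hC : C.IsCrystal) {i : I} {b b' : B}
    (h : C.f i b = some b') : 1 ≤ C.phi i b :=
  (hC.phi_max i b).2 1 (by simp [optIter, h])

end Aux

open CrystalStruct in
/-- if the support of `μ` is contained in that of `λ` and
`b_λ ⊗ y ∈ F({b_λ ⊗ b_μ})`, then `y = b_μ`. -/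
theorem stmt15 {I P B₁ B₂ : Type*} [AddCommGroup P]
    (C₁ : CrystalStruct I P B₁) (C₂ : CrystalStruct I P B₂)
    (hw₁ : B₁) (hw₂ : B₂)
    (h₁ : C₁.IsHWCrystal hw₁) (h₂ : C₂.IsHWCrystal hw₂)
    (hpair : C₂.pair = C₁.pair)
    (hsupp : ∀ i : I, C₁.pair i (C₁.wt hw₁) = 0 → C₂.pair i (C₂.wt hw₂) = 0)
    (y : B₂) (hy : (hw₁, y) ∈ (C₁.tensor C₂).component (hw₁, hw₂)) :
    y = hw₂ := by
  set T := C₁.tensor C₂ with hT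
  set Q : B₁ × B₂ → Prop := fun b => b.1 = hw₁ → b.2 = hw₂ with hQdef
  have hstep : ∀ (i : I) (b b' : B₁ × B₂), Q b → T.f i b = some b' → Q b' := by
    rintro i ⟨x, z⟩ ⟨x', z'⟩ hQ hf
    simp only [hT, tensor] at hf
    split_ifs at hf with hcond
    · -- f acts on the first factor: x' is in the image of f, so x' ≠ hw₁
      obtain ⟨a, ha, hab⟩ := Option.map_eq_some_iff.mp hf
      intro hx'
      have hx'' : x' = hw₁ := hx'
      have hxa : x' = a := by cases hab; rfl
      have : C₁.e i a = some x := (h₁.crystal.C3 i a x).mpr ha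
      rw [hxa.symm, hx''] at this
      rw [h₁.hw_top i] at this
      exact absurd this (by simp)
    · -- f acts on the second factor
      obtain ⟨a, ha, hab⟩ := Option.map_eq_some_iff.mp hf
      have hx : x = x' := by cases hab; rfl
      have hz : z' = a := by cases hab; rfl
      intro hx'
      have hxhw : x = hw₁ := hx.trans hx'
      have hzhw : z = hw₂ := hQ (by simpa using hxhw)
      exfalso
      -- ε_i(hw₂) = 0 and ¬(ε_i(hw₂) < φ_i(hw₁)) force φ_i(hw₁) = 0
      have heps2 : C₂.eps i hw₂ = 0 := aux_eps_eq_zero h₂.crystal (h₂.hw_top i)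
      have heps1 : C₁.eps i hw₁ = 0 := aux_eps_eq_zero h₁.crystal (h₁.hw_top i)
      rw [hxhw, hzhw, heps2] at hcond
      have hphi1 : C₁.phi i hw₁ = 0 := le_antisymm (not_lt.mp hcond)
        (h₁.crystal.phi_nonneg i hw₁)
      have hpl : C₁.pair i (C₁.wt hw₁) = 0 := by
        have := h₁.crystal.C1 i hw₁
        rw [hphi1, heps1] at this; omega
      have hpm : C₂.pair i (C₂.wt hw₂) = 0 := hsupp i hpl
      have hphi2 : C₂.phi i hw₂ = 0 := by
        have := h₂.crystal.C1 i hw₂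
        rw [heps2, hpm] at this; omega
      rw [hzhw] at ha
      have := aux_one_le_phi h₂.crystal ha
      omega
  have hiter : ∀ (k : ℕ) (i : I) (b b' : B₁ × B₂), Q b →
      optIter (T.f i) k b = some b' → Q b' := by
    intro k
    induction k with
    | zero =>
      intro i b b' h h'
      simp only [optIter, Option.some_inj] at h'
      exact h' ▸ h
    | succ n ih =>
      intro i b b' h h'
      simp only [optIter] at h'
      obtain ⟨c, hc, hc'⟩ := Option.bind_eq_some_iff.mp h'
      exact ih i c b' (hstep i b c h hc) hc'
  have hdem : ∀ (L : List I) (X : Set (B₁ × B₂)), (∀ b ∈ X, Q b) →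
      ∀ b ∈ T.demWord L X, Q b := by
    intro L
    induction L with
    | nil => intro X hX b hb; exact hX b hb
    | cons i L ih =>
      intro X hX b hb
      obtain ⟨x, hx, k, hk⟩ := hb
      exact hiter k i x b (ih X hX x hx) hk
  obtain ⟨L, hL⟩ := hy
  have := hdem L {(hw₁, hw₂)} ?_ _ hL
  · exact this rfl
  · rintro b hb
    simp only [Set.mem_singleton_iff] at hb
    subst hb
    intro _; rfl
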